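/- Spanner layer sparsity: let H_i ⊆ G be a subgraph partitioned as H_i = Ĥ_i ∪ (H_i ∖ Ĥ_i), where (a) Ĥ_i has at most 2n vertices and girth greater than 2 log₂(2n), and (b) every edge of H_i ∖ Ĥ_i carries at least c := 2γΔ log(n)/2^i embedded paths, each of the at most N_i := Δn/2^i edges seen by the layer embeds into a path with at most 2γ log n edges. Then |E(Ĥ_i)| ≤ 8n and |E(H_i ∖ Ĥ_i)| ≤ n, hence |E(H_i)| ≤ 9n. -/

import Mathlib

open BigOperators

namespace Stmt19Aux

open Finset SimpleGraph Walk

set_option linter.unusedSectionVars false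

variable {V : Type*} [DecidableEq V] {G : SimpleGraph V}

lemma exists_first_meet {x b : V} (p : G.Walk x b) (S : V → Prop) [DecidablePred S]
    (hb : S b) : ∃ (z : V) (q : G.Walk x z) (rest : G.Walk z b),
      p = q.append rest ∧ S z ∧ ∀ w ∈ q.support, S w → w = z := by
  induction p with
  | nil =>
    refine ⟨_, Walk.nil, Walk.nil, rfl, hb, ?_⟩
    simp
  | @cons u x' b h p ih =>
    by_cases hS : S u
    · exact ⟨u, Walk.nil, Walk.cons h p, rfl, hS, by simp⟩
    · obtain ⟨z, q, rest, hdecomp, hz, hmin⟩ := ih hb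
      refine ⟨z, Walk.cons h q, rest, by rw [Walk.cons_append, hdecomp], hz, ?_⟩
      intro w hw hSw
      rw [Walk.support_cons] at hw
      rcases List.mem_cons.mp hw with rfl | hw
      · exact absurd hSw hS
      · exact hmin w hw hSw

/-- Two distinct paths with the same endpoints yield a cycle of length at most the
sum of the lengths. -/
lemma cycle_of_distinct_paths : ∀ (N : ℕ) {a b : V} (p q : G.Walk a b),
    p.length ≤ N → p.IsPath → q.IsPath → p ≠ q →
    ∃ (c : V) (w : G.Walk c c), w.IsCycle ∧ w.length ≤ p.length + q.length := by
  intro N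
  induction N with
  | zero =>
    intro a b p q hlen hp hq hne
    cases p with
    | nil =>
      rw [Walk.isPath_iff_eq_nil] at hq
      exact absurd hq.symm hne
    | cons h p => simp at hlen
  | succ N ih =>
    intro a b p q hlen hp hq hne
    cases p with
    | nil =>
      rw [Walk.isPath_iff_eq_nil] at hq
      exact absurd hq.symm hne
    | @cons _ x _ h p' =>
      cases q with
      | nil =>
        rw [Walk.isPath_iff_eq_nil] at hp
        simp at hp
      | @cons _ y _ h' q' =>
        rw [Walk.cons_isPath_iff] at hp hq
        by_cases hxy : x = y
        · subst hxy
          have hpq : p' ≠ q' := fun he => hne (by rw [he])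
          obtain ⟨c, w, hw, hwl⟩ := ih p' q' (by simpa using hlen) hp.1 hq.1 hpq
          exact ⟨c, w, hw, by simp only [Walk.length_cons]; omega⟩
        · -- diverging at the start: build a cycle through the first meeting point
          have hbq : b ∈ (Walk.cons h' q').support := Walk.end_mem_support _
          obtain ⟨z, Q1, rest, hdec, hz, hmin⟩ :=
            exists_first_meet p' (· ∈ (Walk.cons h' q').support) hbq
          have hQ1path : Q1.IsPath := by
            have := hp.1
            rw [hdec] at this
            exact this.of_append_left
          set P2 := (Walk.cons h' q').takeUntil z hz with hP2
          have hqfull : (Walk.cons h' q').IsPath := Walk.cons_isPath_iff h' q' |>.2 hq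
          have hP2path : P2.IsPath := hqfull.takeUntil hz
          -- the combined walk from x to a
          have hnodup : (Q1.append P2.reverse).IsPath := by
            rw [Walk.isPath_def, Walk.support_append]
            have h1 : Q1.support.Nodup := hQ1path.support_nodup
            have h2' : P2.reverse.support.Nodup := hP2path.reverse.support_nodup
            have hcons : P2.reverse.support = z :: P2.reverse.support.tail :=
              Walk.support_eq_cons _
            rw [hcons, List.nodup_cons] at h2'
            refine List.Nodup.append h1 h2'.2 ?_
            intro w hw1 hw2
            have hwP2 : w ∈ P2.support := by
              have : w ∈ P2.reverse.support := by
                rw [hcons]; exact List.mem_cons_of_mem _ hw2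
              rwa [Walk.support_reverse, List.mem_reverse] at this
            have hwq : w ∈ (Walk.cons h' q').support :=
              Walk.support_takeUntil_subset _ hz hwP2
            have : w = z := hmin w hw1 hwq
            subst this
            exact h2'.1 hw2
          have he : s(a, x) ∉ (Q1.append P2.reverse).edges := by
            rw [Walk.edges_append]
            intro hmem
            rcases List.mem_append.mp hmem with hmem | hmem
            · have : s(a, x) ∈ p'.edges := by
                rw [hdec, Walk.edges_append]
                exact List.mem_append.mpr (Or.inl hmem)
              exact hp.2 (Walk.fst_mem_support_of_mem_edges _ this)
            · rw [Walk.edges_reverse, List.mem_reverse] at hmem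
              have : s(a, x) ∈ (Walk.cons h' q').edges :=
                Walk.edges_takeUntil_subset _ hz hmem
              rw [Walk.edges_cons] at this
              rcases List.mem_cons.mp this with heq | hmem'
              · rw [Sym2.eq_iff] at heq
                rcases heq with ⟨-, rfl⟩ | ⟨rfl, rfl⟩
                · exact hxy rfl
                · exact h.ne rfl
              · exact hq.2 (Walk.fst_mem_support_of_mem_edges _ hmem')
          refine ⟨a, Walk.cons h (Q1.append P2.reverse),
            SimpleGraph.Path.cons_isCycle ⟨_, hnodup⟩ h he, ?_⟩
          have hQ1len : Q1.length ≤ p'.length := by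
            have := congrArg Walk.length hdec
            rw [Walk.length_append] at this
            omega
          have hP2len : P2.length ≤ (Walk.cons h' q').length :=
            Walk.length_takeUntil_le _ hz
          have hrev : P2.reverse.length = P2.length := Walk.length_reverse _
          simp only [Walk.length_cons, Walk.length_append] at *
          omega
variable {V : Type*} [DecidableEq V] {G : SimpleGraph V}

lemma exists_shortest_path {v u : V} (hr : G.Reachable v u) :
    ∃ p : G.Walk v u, p.IsPath ∧ p.length = G.dist v u := by
  obtain ⟨w, hw⟩ := hr.exists_walk_length_eq_dist
  exact ⟨w.bypass, w.bypass_isPath,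
    le_antisymm (hw ▸ w.length_bypass_le) (G.dist_le _)⟩

lemma dist_lt_of_mem_support_ne_end {v u x : V} (p : G.Walk v u) (hx : x ∈ p.support)
    (hxu : x ≠ u) : G.dist v x < p.length := by
  have hspec := p.take_spec hx
  have hlen : (p.takeUntil x hx).length + (p.dropUntil x hx).length = p.length := by
    have := congrArg Walk.length hspec
    rwa [Walk.length_append] at this
  have hd : 1 ≤ (p.dropUntil x hx).length := by
    by_contra hcon
    have h0 : (p.dropUntil x hx).length = 0 := by omega
    exact hxu (Walk.eq_of_length_eq_zero h0)
  have := G.dist_le (p.takeUntil x hx)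
  omega

lemma reachable_of_dist_pos {v u : V} (h : 0 < G.dist v u) : G.Reachable v u := by
  by_contra hcon
  rw [SimpleGraph.dist_eq_zero_of_not_reachable hcon] at h
  exact Nat.lt_irrefl 0 h

lemma adj_dist_le {v u x : V} (hadj : G.Adj u x) : G.dist v x ≤ G.dist v u + 1 := by
  by_cases hr : G.Reachable v u
  · obtain ⟨p, -, hp⟩ := exists_shortest_path hr
    have := G.dist_le (p.concat hadj)
    rwa [Walk.length_concat, hp] at this
  · have hrx : ¬ G.Reachable v x := fun hx => hr (hx.trans hadj.symm.reachable)
    rw [SimpleGraph.dist_eq_zero_of_not_reachable hrx]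
    omega

lemma exists_parent {v w : V} {k : ℕ} (h : G.dist v w = k + 1) :
    ∃ u, G.Adj u w ∧ G.dist v u = k := by
  have hr : G.Reachable v w := reachable_of_dist_pos (by omega)
  obtain ⟨p, hp, hlen⟩ := exists_shortest_path hr
  cases p with
  | nil => rw [h] at hlen; simp at hlen
  | @cons _ x _ hadj p' =>
    obtain ⟨u, q, hadj', hconcat⟩ := Walk.exists_cons_eq_concat hadj p'
    refine ⟨u, hadj', ?_⟩
    have hql : q.length + 1 = k + 1 := by
      have := congrArg Walk.length hconcat
      rw [Walk.length_concat] at this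
      rw [← h, ← hlen, this]
    have h1 : G.dist v u ≤ k := by
      have := G.dist_le q
      omega
    have h2 : k + 1 ≤ G.dist v u + 1 := by
      rw [← h]
      exact adj_dist_le hadj'
    omega

lemma parent_unique {k : ℕ}
    (hnc : ∀ (c : V) (w : G.Walk c c), w.IsCycle → ¬ w.length ≤ 2 * k + 2)
    {v w u₁ u₂ : V} (hw : G.dist v w = k + 1)
    (h1 : G.Adj u₁ w) (hd1 : G.dist v u₁ ≤ k) (h2 : G.Adj u₂ w) (hd2 : G.dist v u₂ ≤ k) :
    u₁ = u₂ := by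
  by_contra hne
  have hrw : G.Reachable v w := reachable_of_dist_pos (by omega)
  have hr1 : G.Reachable v u₁ := hrw.trans h1.symm.reachable
  have hr2 : G.Reachable v u₂ := hrw.trans h2.symm.reachable
  obtain ⟨p₁, hp₁, hl₁⟩ := exists_shortest_path hr1
  obtain ⟨p₂, hp₂, hl₂⟩ := exists_shortest_path hr2
  have hwp : ∀ (u : V) (p : G.Walk v u), p.IsPath → p.length = G.dist v u →
      G.dist v u ≤ k → G.Adj u w → w ∉ p.support := by
    intro u p hp hl hd hadj hmem
    have hwu : w ≠ u := fun he => by rw [he] at hw; omega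
    have := dist_lt_of_mem_support_ne_end p hmem hwu
    omega
  have hw1 : w ∉ p₁.support := hwp u₁ p₁ hp₁ hl₁ hd1 h1
  have hw2 : w ∉ p₂.support := hwp u₂ p₂ hp₂ hl₂ hd2 h2
  have hQ1 : (p₁.concat h1).IsPath := by
    rw [← Walk.isPath_reverse_iff, Walk.reverse_concat]
    refine hp₁.reverse.cons ?_
    rwa [Walk.support_reverse, List.mem_reverse]
  have hQ2 : (p₂.concat h2).IsPath := by
    rw [← Walk.isPath_reverse_iff, Walk.reverse_concat]
    refine hp₂.reverse.cons ?_
    rwa [Walk.support_reverse, List.mem_reverse]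
  have hQne : p₁.concat h1 ≠ p₂.concat h2 := by
    intro heq
    have := congrArg (fun r => r.reverse.getVert 1) heq
    simp only [Walk.reverse_concat] at this
    simp only [Walk.getVert_cons_succ, Walk.getVert_zero] at this
    exact hne this
  obtain ⟨c, cyc, hcyc, hclen⟩ := cycle_of_distinct_paths (p₁.concat h1).length
    (p₁.concat h1) (p₂.concat h2) le_rfl hQ1 hQ2 hQne
  refine hnc c cyc hcyc ?_
  rw [Walk.length_concat, Walk.length_concat] at hclen
  omega

lemma no_level_edge {k : ℕ}
    (hnc : ∀ (c : V) (w : G.Walk c c), w.IsCycle → ¬ w.length ≤ 2 * k + 1)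
    (hk : 1 ≤ k) {v u x : V}
    (hu : G.dist v u = k) (hx : G.dist v x = k) (hadj : G.Adj u x) : False := by
  have hru : G.Reachable v u := reachable_of_dist_pos (by omega)
  have hrx : G.Reachable v x := reachable_of_dist_pos (by omega)
  obtain ⟨p, hp, hlp⟩ := exists_shortest_path hru
  obtain ⟨q, hq, hlq⟩ := exists_shortest_path hrx
  have hxp : x ∉ p.support := by
    intro hmem
    have hxu : x ≠ u := hadj.ne'
    have := dist_lt_of_mem_support_ne_end p hmem hxu
    omega
  have hR : (p.concat hadj).IsPath := by
    rw [← Walk.isPath_reverse_iff, Walk.reverse_concat]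
    refine hp.reverse.cons ?_
    rwa [Walk.support_reverse, List.mem_reverse]
  have hRne : p.concat hadj ≠ q := by
    intro heq
    have := congrArg Walk.length heq
    rw [Walk.length_concat] at this
    omega
  obtain ⟨c, cyc, hcyc, hclen⟩ := cycle_of_distinct_paths (p.concat hadj).length
    (p.concat hadj) q le_rfl hR hq hRne
  refine hnc c cyc hcyc ?_
  rw [Walk.length_concat] at hclen
  omega

lemma moore {V : Type*} [Fintype V] [DecidableEq V] (G : SimpleGraph V)
    [DecidableRel G.Adj] (r : ℕ) (hr : 1 ≤ r)
    (hnc : ∀ (c : V) (w : G.Walk c c), w.IsCycle → ¬ w.length ≤ 2 * r)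
    (hdeg : ∀ w, G.degree w = 0 ∨ 3 ≤ G.degree w)
    (v : V) (hv : 3 ≤ G.degree v) :
    3 * 2 ^ r - 2 ≤ Fintype.card V := by
  classical
  set S : ℕ → Finset V := fun k => univ.filter (fun w => G.dist v w = k) with hS
  have hmemS : ∀ (k : ℕ) (w : V), w ∈ S k ↔ G.dist v w = k := by
    intro k w; simp [hS]
  -- neighbors' distances
  have hdistadj : ∀ (u x : V), G.Adj u x →
      G.dist v u ≤ G.dist v x + 1 ∧ G.dist v x ≤ G.dist v u + 1 :=
    fun u x hadj => ⟨adj_dist_le hadj.symm, adj_dist_le hadj⟩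
  -- base : the neighbors of v form S 1
  have hS1 : 3 ≤ (S 1).card := by
    have hsub : G.neighborFinset v ⊆ S 1 := by
      intro x hx
      rw [SimpleGraph.mem_neighborFinset] at hx
      rw [hmemS]
      have h1 : G.dist v x ≤ 1 := by
        have := G.dist_le hx.toWalk
        simpa using this
      have h0 : G.dist v x ≠ 0 := by
        intro h0
        exact hx.ne (hx.reachable.dist_eq_zero_iff.mp h0)
      omega
    calc 3 ≤ G.degree v := hv
    _ = (G.neighborFinset v).card := (G.card_neighborFinset_eq_degree v).symm
    _ ≤ (S 1).card := card_le_card hsub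
  -- every vertex at positive distance has a neighbor, hence degree ≥ 3
  have hdeg3 : ∀ (u : V) (k : ℕ), 1 ≤ k → G.dist v u = k → 3 ≤ G.degree u := by
    intro u k hk hdu
    rcases hdeg u with h0 | h3
    · exfalso
      have hru : G.Reachable v u := reachable_of_dist_pos (by omega)
      obtain ⟨p, hp, hlp⟩ := exists_shortest_path hru
      cases p with
      | nil => rw [hdu] at hlp; simp at hlp; omega
      | @cons _ y _ hadj p' =>
        obtain ⟨z, q, hadj', -⟩ := Walk.exists_cons_eq_concat hadj p'
        have : z ∈ G.neighborFinset u := by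
          rw [SimpleGraph.mem_neighborFinset]; exact hadj'.symm
        have hpos : 0 < G.degree u := by
          rw [← G.card_neighborFinset_eq_degree]
          exact card_pos.mpr ⟨z, this⟩
        omega
    · exact h3
  -- growth of spheres
  have grow : ∀ k, 1 ≤ k → k + 1 ≤ r → 2 * (S k).card ≤ (S (k + 1)).card := by
    intro k hk1 hkr
    have hpar : ∀ x, G.dist v x = k + 1 → ∃ u, G.Adj u x ∧ G.dist v u = k :=
      fun x hx => exists_parent hx
    set par : V → V := fun x =>
      if h : ∃ u, G.Adj u x ∧ G.dist v u = k then h.choose else x with hpardef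
    have hparspec : ∀ x ∈ S (k + 1), G.Adj (par x) x ∧ G.dist v (par x) = k := by
      intro x hx
      rw [hmemS] at hx
      have hex := hpar x hx
      simp only [hpardef, dif_pos hex]
      exact hex.choose_spec
    have hmaps : ∀ x ∈ S (k + 1), par x ∈ S k := by
      intro x hx
      rw [hmemS]
      exact (hparspec x hx).2
    have hfibers : ∀ u ∈ S k, 2 ≤ ((S (k + 1)).filter (fun x => par x = u)).card := by
      intro u hu
      rw [hmemS] at hu
      have hud3 : 3 ≤ G.degree u := hdeg3 u k hk1 hu
      -- at most one neighbor of u is at distance ≠ k+1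
      have hone : ((G.neighborFinset u).filter (fun x => ¬ G.dist v x = k + 1)).card ≤ 1 := by
        rw [Finset.card_le_one]
        intro a ha b hb
        rw [Finset.mem_filter, SimpleGraph.mem_neighborFinset] at ha hb
        have hda : G.dist v a ≤ k - 1 := by
          have hb1 := (hdistadj u a ha.1).2
          have hne : G.dist v a ≠ k := by
            intro heq
            exact no_level_edge (k := k)
              (fun c w hw hl => hnc c w hw (by omega)) hk1 hu heq ha.1
          omega
        have hdb : G.dist v b ≤ k - 1 := by
          have hb1 := (hdistadj u b hb.1).2
          have hne : G.dist v b ≠ k := by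
            intro heq
            exact no_level_edge (k := k)
              (fun c w hw hl => hnc c w hw (by omega)) hk1 hu heq hb.1
          omega
        have hu' : G.dist v u = (k - 1) + 1 := by omega
        exact parent_unique (k := k - 1)
          (fun c w hw hl => hnc c w hw (by omega)) hu'
          ha.1.symm hda hb.1.symm hdb
      have hkey : 2 ≤ ((G.neighborFinset u).filter (fun x => G.dist v x = k + 1)).card := by
        have hsplit := Finset.card_filter_add_card_filter_not
          (s := G.neighborFinset u) (p := fun x => G.dist v x = k + 1)
        rw [G.card_neighborFinset_eq_degree] at hsplit
        omega
      refine le_trans hkey (card_le_card ?_)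
      intro x hx
      rw [Finset.mem_filter, SimpleGraph.mem_neighborFinset] at hx
      rw [Finset.mem_filter, hmemS]
      refine ⟨hx.2, ?_⟩
      have hxS : x ∈ S (k + 1) := by rw [hmemS]; exact hx.2
      obtain ⟨hadjp, hdp⟩ := hparspec x hxS
      exact parent_unique (k := k)
        (fun c w hw hl => hnc c w hw (by omega)) hx.2
        hadjp (le_of_eq hdp) hx.1 (le_of_eq hu)
    have hcount := Finset.card_eq_sum_card_fiberwise hmaps
    calc 2 * (S k).card = ∑ _u ∈ S k, 2 := by
          rw [Finset.sum_const, smul_eq_mul, mul_comm]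
    _ ≤ ∑ u ∈ S k, ((S (k + 1)).filter (fun x => par x = u)).card :=
          Finset.sum_le_sum hfibers
    _ = (S (k + 1)).card := hcount.symm
  -- sphere sizes
  have hpow : ∀ k, 1 ≤ k → k ≤ r → 3 * 2 ^ (k - 1) ≤ (S k).card := by
    intro k
    induction k with
    | zero => omega
    | succ k ih =>
      intro _ hkr
      rcases Nat.eq_zero_or_pos k with rfl | hk
      · simpa using hS1
      · have h1 := ih hk (by omega)
        have h2 := grow k hk hkr
        have hexp : 3 * 2 ^ (k + 1 - 1) = 2 * (3 * 2 ^ (k - 1)) := by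
          obtain ⟨m, rfl⟩ := Nat.exists_eq_add_of_le hk
          simp only [Nat.add_sub_cancel_left, Nat.add_sub_cancel]
          rw [pow_add, pow_one]
          ring
        rw [hexp]
        omega
  -- disjoint sum of spheres
  have hdisj : ∀ i ∈ Finset.range (r + 1), ∀ j ∈ Finset.range (r + 1), i ≠ j →
      Disjoint (S i) (S j) := by
    intro i _ j _ hij
    rw [Finset.disjoint_left]
    intro w hwi hwj
    rw [hmemS] at hwi hwj
    omega
  have hsum : ∑ k ∈ Finset.range (r + 1), (S k).card ≤ Fintype.card V := by
    rw [← Finset.card_biUnion hdisj]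
    exact Finset.card_le_univ _
  have h0 : 1 ≤ (S 0).card := by
    refine card_pos.mpr ⟨v, ?_⟩
    rw [hmemS]
    exact SimpleGraph.dist_self
  have hgeom : ∀ m : ℕ, (∑ k ∈ Finset.range m, 3 * 2 ^ k) + 3 = 3 * 2 ^ m := by
    intro m
    induction m with
    | zero => simp
    | succ m ih => rw [Finset.sum_range_succ, pow_succ]; omega
  have hterm : ∀ k ∈ Finset.range r, 3 * 2 ^ k ≤ (S (k + 1)).card := by
    intro k hkmem
    rw [Finset.mem_range] at hkmem
    have := hpow (k + 1) (by omega) (by omega)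
    simpa using this
  have hchain : 1 + ∑ k ∈ Finset.range r, 3 * 2 ^ k ≤ ∑ k ∈ Finset.range (r + 1), (S k).card := by
    rw [Finset.sum_range_succ']
    have := Finset.sum_le_sum hterm
    omega
  have hg := hgeom r
  omega

lemma peel {V : Type*} [Fintype V] [DecidableEq V] (r n : ℕ) (hr : 1 ≤ r) (hn : 2 ≤ n)
    (h2r : n + 1 ≤ 2 ^ r) (hV : Fintype.card V ≤ 2 * n) :
    ∀ (m : ℕ) (G : SimpleGraph V) (inst : DecidableRel G.Adj),
    G.edgeSet.ncard ≤ m →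
    (∀ (c : V) (w : G.Walk c c), w.IsCycle → ¬ w.length ≤ 2 * r) →
    G.edgeSet.ncard ≤ 2 * (univ.filter fun w => 0 < G.degree w).card := by
  intro m
  induction m with
  | zero =>
    intro G inst hm hnc
    omega
  | succ m ih =>
    intro G inst hm hnc
    have hconv : G.edgeSet.ncard = G.edgeFinset.card :=
      Set.ncard_eq_toFinset_card' _
    rw [hconv] at hm ⊢
    by_cases hcase : ∃ u, 0 < G.degree u ∧ G.degree u ≤ 2
    · obtain ⟨u, hu1, hu2⟩ := hcase
      set G' := G.deleteEdges ↑(G.incidenceFinset u) with hG'def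
      have instG' : DecidableRel G'.Adj := by
        intro a b
        rw [hG'def]
        simp only [SimpleGraph.deleteEdges_adj, Finset.coe_sort_coe, Finset.mem_coe]
        infer_instance
      have hle : G' ≤ G := SimpleGraph.deleteEdges_le _
      have hnc' : ∀ (c : V) (w : G'.Walk c c), w.IsCycle → ¬ w.length ≤ 2 * r := by
        intro c w hw hlen
        refine hnc c (w.mapLe hle) (hw.mapLe hle) ?_
        simpa [Walk.mapLe] using hlen
      have hedge : G'.edgeFinset = G.edgeFinset \ G.incidenceFinset u := by
        ext e
        simp only [SimpleGraph.mem_edgeFinset, Finset.mem_sdiff, hG'def,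
          SimpleGraph.edgeSet_deleteEdges, Set.mem_diff, Finset.mem_coe,
          SimpleGraph.mem_incidenceFinset]
      have hsubinc : G.incidenceFinset u ⊆ G.edgeFinset := by
        intro e he
        rw [SimpleGraph.mem_incidenceFinset] at he
        rw [SimpleGraph.mem_edgeFinset]
        exact G.incidenceSet_subset u he
      have hcard' : G'.edgeFinset.card = G.edgeFinset.card - G.degree u := by
        rw [hedge, Finset.card_sdiff_of_subset hsubinc, G.card_incidenceFinset_eq_degree]
      have hdegu : G'.degree u = 0 := by
        rw [← SimpleGraph.card_neighborFinset_eq_degree]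
        rw [Finset.card_eq_zero, Finset.eq_empty_iff_forall_notMem]
        intro b hb
        rw [SimpleGraph.mem_neighborFinset, hG'def] at hb
        rw [SimpleGraph.deleteEdges_adj] at hb
        refine hb.2 ?_
        rw [Finset.mem_coe, SimpleGraph.mem_incidenceFinset]
        exact ⟨G.mem_edgeSet.mpr hb.1, Sym2.mem_mk_left u b⟩
      have hdegle : ∀ w, G'.degree w ≤ G.degree w := by
        intro w
        rw [← SimpleGraph.card_neighborFinset_eq_degree,
          ← SimpleGraph.card_neighborFinset_eq_degree]
        refine Finset.card_le_card ?_
        intro b hb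
        rw [SimpleGraph.mem_neighborFinset] at hb ⊢
        exact hle hb
      have hsupp : (univ.filter fun w => 0 < G'.degree w) ⊆
          (univ.filter fun w => 0 < G.degree w) \ {u} := by
        intro w hw
        rw [Finset.mem_filter] at hw
        rw [Finset.mem_sdiff, Finset.mem_filter, Finset.mem_singleton]
        refine ⟨⟨Finset.mem_univ _, lt_of_lt_of_le hw.2 (hdegle w)⟩, ?_⟩
        intro heq
        rw [heq, hdegu] at hw
        omega
      have husupp : u ∈ (univ.filter fun w => 0 < G.degree w) := by
        rw [Finset.mem_filter]; exact ⟨Finset.mem_univ _, hu1⟩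
      have hsuppcard : (univ.filter fun w => 0 < G'.degree w).card + 1 ≤
          (univ.filter fun w => 0 < G.degree w).card := by
        calc (univ.filter fun w => 0 < G'.degree w).card + 1
            ≤ ((univ.filter fun w => 0 < G.degree w) \ {u}).card + 1 :=
              by have := Finset.card_le_card hsupp; omega
        _ ≤ (univ.filter fun w => 0 < G.degree w).card := by
              rw [Finset.card_sdiff_of_subset (by simpa using husupp)]
              have : 1 ≤ (univ.filter fun w => 0 < G.degree w).card :=
                Finset.card_pos.mpr ⟨u, husupp⟩
              simp only [Finset.card_singleton]
              omega
      have hconv' : G'.edgeSet.ncard = G'.edgeFinset.card :=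
        Set.ncard_eq_toFinset_card' _
      have hrec := ih G' instG' (by omega) hnc'
      rw [hconv'] at hrec
      omega
    · push_neg at hcase
      have hdeg : ∀ w, G.degree w = 0 ∨ 3 ≤ G.degree w := by
        intro w
        by_cases h : 0 < G.degree w
        · right; have := hcase w h; omega
        · left; omega
      by_cases hE : G.edgeFinset.card = 0
      · omega
      · exfalso
        obtain ⟨e, he⟩ := Finset.card_pos.mp (by omega : 0 < G.edgeFinset.card)
        induction e with
        | _ a b =>
          rw [SimpleGraph.mem_edgeFinset, SimpleGraph.mem_edgeSet] at he
          have hposa : 0 < G.degree a := by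
            rw [← SimpleGraph.card_neighborFinset_eq_degree]
            exact Finset.card_pos.mpr ⟨b, by rwa [SimpleGraph.mem_neighborFinset]⟩
          have hv3 : 3 ≤ G.degree a := by rcases hdeg a with h | h <;> omega
          have := moore G r hr hnc hdeg a hv3
          have hpow : 3 * (n + 1) ≤ 3 * 2 ^ r := by omega
          omega
end Stmt19Aux

/-- Spanner layer sparsity.  Layer `i` of the incremental spanner consists of a girth
part `Ĥ` (a graph on at most `2n` vertices in which every cycle is longer than
`2 log₂(2n)`) and a set `F` of congested edges: each of the at most `Δn/2^i` embedded
paths of the layer uses at most `2γ log₂ n` edges of `F`, while each edge of `F` carries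
at least `2γΔ log₂(n)/2^i` paths.  Then `|E(Ĥ)| ≤ 8n`, `|F| ≤ n`, and the layer has at
most `9n` edges in total. -/
theorem stmt_19 {W F P : Type*} [Fintype W] [Fintype F] [Fintype P] [DecidableEq F]
    (n Δ i : ℕ) (hn : 2 ≤ n) (hΔ : 1 ≤ Δ) (γ : ℝ) (hγ : 1 ≤ γ)
    (Hhat : SimpleGraph W) [DecidableRel Hhat.Adj]
    (hW : Fintype.card W ≤ 2 * n)
    (hgirth : ∀ (v : W) (c : Hhat.Walk v v), c.IsCycle →
      2 * Real.logb 2 (2 * n) < (c.length : ℝ))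
    (route : P → Finset F)
    (hP : (Fintype.card P : ℝ) ≤ (Δ : ℝ) * n / 2 ^ i)
    (hlen : ∀ p, ((route p).card : ℝ) ≤ 2 * γ * Real.logb 2 n)
    (hload : ∀ e : F, 2 * γ * (Δ : ℝ) * Real.logb 2 n / 2 ^ i ≤
      ((Finset.univ.filter fun p : P => e ∈ route p).card : ℝ)) :
    Hhat.edgeFinset.card ≤ 8 * n ∧ Fintype.card F ≤ n ∧
    Hhat.edgeFinset.card + Fintype.card F ≤ 9 * n := by
  have hn0 : (0:ℝ) < n := by positivity
  have hnn : (2:ℝ) ≤ (n:ℝ) := by exact_mod_cast hn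
  have hL1 : (1:ℝ) ≤ Real.logb 2 n := by
    have := Real.logb_le_logb_of_le (b := 2) (by norm_num) (by norm_num : (0:ℝ) < 2) hnn
    rwa [Real.logb_self_eq_one (by norm_num)] at this
  -- ===== Part 1 : the girth part =====
  have part1 : Hhat.edgeFinset.card ≤ 8 * n := by
    set r : ℕ := Nat.log 2 n + 1 with hrdef
    have hr1 : 1 ≤ r := by omega
    have h2r : n + 1 ≤ 2 ^ r := Nat.lt_pow_succ_log_self (by norm_num) n
    -- r ≤ logb 2 (2n)
    have hrlog : (r : ℝ) ≤ Real.logb 2 (2 * n) := by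
      have hlogmul : Real.logb 2 (2 * (n:ℝ)) = 1 + Real.logb 2 n := by
        rw [Real.logb_mul (by norm_num) (by positivity),
          Real.logb_self_eq_one (by norm_num)]
      have hnatlog : ((Nat.log 2 n : ℕ) : ℝ) ≤ Real.logb 2 n := by
        have hpow : (2:ℝ) ^ (Nat.log 2 n) ≤ (n:ℝ) := by
          exact_mod_cast Nat.pow_log_le_self 2 (by omega)
        have := Real.logb_le_logb_of_le (b := 2) (by norm_num)
          (by positivity : (0:ℝ) < (2:ℝ) ^ (Nat.log 2 n)) hpow
        rwa [Real.logb_pow, Real.logb_self_eq_one (by norm_num), mul_one] at this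
      rw [hrdef]
      push_cast
      rw [hlogmul]
      linarith
    have hnc : ∀ (c : W) (w : Hhat.Walk c c), w.IsCycle → ¬ w.length ≤ 2 * r := by
      intro c w hw hle
      have h1 := hgirth c w hw
      have h2 : (w.length : ℝ) ≤ 2 * r := by exact_mod_cast hle
      linarith [h1, hrlog]
    have hconv : Hhat.edgeSet.ncard = Hhat.edgeFinset.card :=
      Set.ncard_eq_toFinset_card' _
    have hpeel := @Stmt19Aux.peel W _ (Classical.decEq W) r n hr1 hn h2r hW
      Hhat.edgeSet.ncard Hhat (by infer_instance) le_rfl hnc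
    have hsupp : (Finset.univ.filter fun w => 0 < Hhat.degree w).card ≤ Fintype.card W :=
      le_trans (Finset.card_filter_le _ _) (by rw [Finset.card_univ])
    omega
  -- ===== Part 2 : congestion counting =====
  have part2 : Fintype.card F ≤ n := by
    set L := Real.logb 2 n with hLdef
    have hc0 : (0:ℝ) < 2 * γ * (Δ:ℝ) * L / 2 ^ i := by
      have : (1:ℝ) ≤ (Δ:ℝ) := by exact_mod_cast hΔ
      positivity
    have hdouble : ∑ e : F, ((Finset.univ.filter fun p : P => e ∈ route p).card) =
        ∑ p : P, (route p).card := by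
      simp only [Finset.card_filter]
      rw [Finset.sum_comm]
      congr 1
      ext p
      rw [← Finset.card_filter]
      congr 1
      exact Finset.filter_univ_mem _
    have hchain : (Fintype.card F : ℝ) * (2 * γ * (Δ:ℝ) * L / 2 ^ i) ≤
        (n : ℝ) * (2 * γ * (Δ:ℝ) * L / 2 ^ i) := by
      calc (Fintype.card F : ℝ) * (2 * γ * (Δ:ℝ) * L / 2 ^ i)
          = ∑ _e : F, (2 * γ * (Δ:ℝ) * L / 2 ^ i) := by
            rw [Finset.sum_const, Finset.card_univ, nsmul_eq_mul]
      _ ≤ ∑ e : F, ((Finset.univ.filter fun p : P => e ∈ route p).card : ℝ) :=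
            Finset.sum_le_sum (fun e _ => hload e)
      _ = ∑ p : P, ((route p).card : ℝ) := by exact_mod_cast congrArg Nat.cast hdouble
      _ ≤ ∑ _p : P, (2 * γ * L) := Finset.sum_le_sum (fun p _ => hlen p)
      _ = (Fintype.card P : ℝ) * (2 * γ * L) := by
            rw [Finset.sum_const, Finset.card_univ, nsmul_eq_mul]
      _ ≤ ((Δ : ℝ) * n / 2 ^ i) * (2 * γ * L) := by
            have h2γL : (0:ℝ) ≤ 2 * γ * L := by positivity
            exact mul_le_mul_of_nonneg_right hP h2γL
      _ = (n : ℝ) * (2 * γ * (Δ:ℝ) * L / 2 ^ i) := by ring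
    have : (Fintype.card F : ℝ) ≤ (n : ℝ) :=
      le_of_mul_le_mul_right hchain hc0
    exact_mod_cast this
  exact ⟨part1, part2, by omega⟩
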